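/- For every integer t ≥ 2, the graph G_t has exactly (t^3 + t^2)/2 − t minimal connected dominating sets that have non-empty intersection with the set X. -/

import Mathlib

/-- `S` is a connected dominating set of `G`. -/
def IsCDS {V : Type*} (G : SimpleGraph V) (S : Set V) : Prop :=
  (∀ v, v ∈ S ∨ ∃ u ∈ S, G.Adj u v) ∧ (G.induce S).Connected

/-- `S` is an inclusion-minimal connected dominating set of `G`. -/
def IsMinCDS {V : Type*} (G : SimpleGraph V) (S : Set V) : Prop :=
  IsCDS G S ∧ ∀ T : Set V, T ⊂ S → ¬ IsCDS G T

/-- Vertices of `G_t`: `Sum.inl i` is `x_i`, `Sum.inr (Sum.inl j)` is `y_j`,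
and `Sum.inr (Sum.inr ())` is `z`. -/
abbrev GtV (t : ℕ) := Fin t ⊕ (Fin t ⊕ Unit)

/-- Base relation for `G_t`: `X` is a clique, `x_i ~ y_j` iff `i ≠ j`,
`Y` is independent, and `z` is adjacent exactly to all of `Y`. -/
def GtRel (t : ℕ) : GtV t → GtV t → Prop
  | .inl i, .inl j => i ≠ j
  | .inl i, .inr (.inl j) => i ≠ j
  | .inr (.inl _), .inr (.inr _) => True
  | _, _ => False

/-- The graph `G_t`. -/
def Gt (t : ℕ) : SimpleGraph (GtV t) := SimpleGraph.fromRel (GtRel t)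

section Helpers

open SimpleGraph

variable {t : ℕ}


variable {t : ℕ}
local notation "X" i => (Sum.inl i : Fin _ ⊕ (Fin _ ⊕ Unit))
local notation "Y" j => (Sum.inr (Sum.inl j) : Fin _ ⊕ (Fin _ ⊕ Unit))
local notation "Z" => (Sum.inr (Sum.inr ()) : Fin _ ⊕ (Fin _ ⊕ Unit))

@[simp] lemma adj_xx {i j : Fin t} : (Gt t).Adj (X i) (X j) ↔ i ≠ j := by
  simp [Gt, SimpleGraph.fromRel_adj, GtRel]; tauto
@[simp] lemma adj_xy {i j : Fin t} : (Gt t).Adj (X i) (Y j) ↔ i ≠ j := by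
  simp [Gt, SimpleGraph.fromRel_adj, GtRel]
@[simp] lemma adj_yx {i j : Fin t} : (Gt t).Adj (Y j) (X i) ↔ i ≠ j := by
  rw [SimpleGraph.adj_comm]; exact adj_xy
@[simp] lemma adj_yy {i j : Fin t} : ¬ (Gt t).Adj (Y i) (Y j) := by
  simp [Gt, SimpleGraph.fromRel_adj, GtRel]
@[simp] lemma adj_yz {j : Fin t} : (Gt t).Adj (Y j) Z := by
  simp [Gt, SimpleGraph.fromRel_adj, GtRel]
@[simp] lemma adj_zy {j : Fin t} : (Gt t).Adj Z (Y j) := adj_yz.symm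
@[simp] lemma adj_xz {i : Fin t} : ¬ (Gt t).Adj (X i) Z := by
  simp [Gt, SimpleGraph.fromRel_adj, GtRel]
@[simp] lemma adj_zx {i : Fin t} : ¬ (Gt t).Adj Z (X i) := fun h => adj_xz h.symm

lemma preconn_of_hub {V : Type*} {G : SimpleGraph V} {S : Set V} (a : S)
    (h : ∀ b : S, (G.induce S).Reachable b a) :
    (G.induce S).Preconnected := fun u v => (h u).trans (h v).symm

lemma cds1 (ht : 2 ≤ t) {i j k : Fin t} (hij : i ≠ j) :
    IsCDS (Gt t) {X i, X j, Y k} := by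
  constructor
  · rintro (m | m | ⟨⟩)
    · by_cases hm : m = i
      · subst hm; exact Or.inl (by simp)
      · exact Or.inr ⟨X i, by simp, by simp [Ne.symm hm]⟩
    · by_cases hm : m = i
      · subst hm
        exact Or.inr ⟨X j, by simp, by simp [Ne.symm hij]⟩
      · exact Or.inr ⟨X i, by simp, by simp [Ne.symm hm]⟩
    · exact Or.inr ⟨Y k, by simp, adj_yz⟩
  · have hi : (X i) ∈ ({X i, X j, Y k} : Set _) := by simp
    haveI : Nonempty ↥({X i, X j, Y k} : Set _) := ⟨⟨X i, hi⟩⟩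
    refine ⟨preconn_of_hub ⟨X i, hi⟩ ?_⟩
    rintro ⟨v, hv⟩
    rcases hv with rfl | rfl | rfl
    · rfl
    · exact Adj.reachable (by simp [Ne.symm hij])
    · by_cases hk : k = i
      · subst hk
        have h1 : ((Gt t).induce {X k, X j, Y k}).Reachable ⟨Y k, by simp⟩ ⟨X j, by simp⟩ :=
          Adj.reachable (by simp [Ne.symm hij])
        exact h1.trans (Adj.reachable (by simp [Ne.symm hij]))
      · exact Adj.reachable (by simp [Ne.symm hk])

lemma cds2 (ht : 2 ≤ t) {i j : Fin t} (hij : i ≠ j) :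
    IsCDS (Gt t) {X i, Y j, Z} := by
  constructor
  · rintro (m | m | ⟨⟩)
    · by_cases hm : m = i
      · subst hm; exact Or.inl (by simp)
      · exact Or.inr ⟨X i, by simp, by simp [Ne.symm hm]⟩
    · exact Or.inr ⟨Z, by simp, by simp⟩
    · exact Or.inl (by simp)
  · have hj : (Y j) ∈ ({X i, Y j, Z} : Set _) := by simp
    haveI : Nonempty ↥({X i, Y j, Z} : Set _) := ⟨⟨Y j, hj⟩⟩
    refine ⟨preconn_of_hub ⟨Y j, hj⟩ ?_⟩
    rintro ⟨v, hv⟩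
    rcases hv with rfl | rfl | rfl
    · exact Adj.reachable (by simp [hij])
    · rfl
    · exact Adj.reachable (by simp)

lemma exists_adj_of_conn {V : Type*} {G : SimpleGraph V} {S : Set V}
    (hc : (G.induce S).Connected) {v w : V}
    (hv : v ∈ S) (hw : w ∈ S) (hvw : v ≠ w) : ∃ u ∈ S, G.Adj v u := by
  obtain ⟨p⟩ := hc.preconnected ⟨v, hv⟩ ⟨w, hw⟩
  cases p with
  | nil => exact absurd rfl hvw
  | @cons _ u _ h _ => exact ⟨u.val, u.property, by simpa using h⟩

lemma struct {S : Set (Fin t ⊕ (Fin t ⊕ Unit))} (hS : IsCDS (Gt t) S)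
    {a : Fin t} (ha : (X a) ∈ S) :
    (∃ i j k : Fin t, i ≠ j ∧ ({X i, X j, Y k} : Set _) ⊆ S) ∨
    (∃ i j : Fin t, i ≠ j ∧ ({X i, Y j, Z} : Set _) ⊆ S) := by
  have step1 : ∃ k : Fin t, (Y k) ∈ S := by
    rcases hS.1 Z with hz | ⟨u, hu, hadj⟩
    · obtain ⟨u, hu, hadj⟩ := exists_adj_of_conn hS.2 hz ha (by simp)
      rcases u with m | m | ⟨⟩
      · exact absurd hadj adj_zx
      · exact ⟨m, hu⟩
      · exact absurd hadj (Gt t).irrefl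
    · rcases u with m | m | ⟨⟩
      · exact absurd hadj adj_xz
      · exact ⟨m, hu⟩
      · exact absurd hadj (Gt t).irrefl
  by_cases hb : ∃ b, b ≠ a ∧ (X b) ∈ S
  · obtain ⟨b, hba, hbS⟩ := hb
    obtain ⟨k, hk⟩ := step1
    refine Or.inl ⟨a, b, k, Ne.symm hba, ?_⟩
    rintro v (rfl | rfl | rfl) <;> assumption
  · push_neg at hb
    have hy2 : ∃ m, m ≠ a ∧ (Y m) ∈ S := by
      obtain ⟨k, hk⟩ := step1
      obtain ⟨u, hu, hadj⟩ := exists_adj_of_conn hS.2 ha hk (by simp)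
      rcases u with m | m | ⟨⟩
      · have : a ≠ m := by simpa using hadj
        exact absurd hu (hb m (Ne.symm this))
      · exact ⟨m, Ne.symm (by simpa using hadj), hu⟩
      · exact absurd hadj adj_xz
    by_cases hz : Z ∈ S
    · obtain ⟨m, hm, hym⟩ := hy2
      refine Or.inr ⟨a, m, Ne.symm hm, ?_⟩
      rintro v (rfl | rfl | rfl) <;> assumption
    · exfalso
      have hya : (Y a) ∈ S := by
        rcases hS.1 (Y a) with h | ⟨u, hu, hadj⟩
        · exact h
        · rcases u with m | m | ⟨⟩
          · have : m ≠ a := by simpa using hadj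
            exact absurd hu (hb m this)
          · exact absurd hadj adj_yy
          · exact absurd hu hz
      obtain ⟨u, hu, hadj⟩ := exists_adj_of_conn hS.2 hya ha (by simp)
      rcases u with m | m | ⟨⟩
      · have : m ≠ a := by simpa [eq_comm] using hadj
        exact absurd hu (hb m this)
      · exact absurd hadj adj_yy
      · exact absurd hu hz

lemma ncard1 {i j k : Fin t} (hij : i ≠ j) :
    ({X i, X j, Y k} : Set (Fin t ⊕ (Fin t ⊕ Unit))).ncard = 3 := by
  rw [Set.ncard_insert_of_notMem (by simp [hij]) ((Set.finite_singleton _).insert _),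
    Set.ncard_pair (by simp)]

lemma ncard2 {i j : Fin t} :
    ({X i, Y j, Z} : Set (Fin t ⊕ (Fin t ⊕ Unit))).ncard = 3 := by
  rw [Set.ncard_insert_of_notMem (by simp) ((Set.finite_singleton _).insert _),
    Set.ncard_pair (by simp)]

lemma minimal1 (ht : 2 ≤ t) {i j k : Fin t} (hij : i ≠ j)
    {T : Set (Fin t ⊕ (Fin t ⊕ Unit))} (hT : T ⊂ {X i, X j, Y k}) :
    ¬ IsCDS (Gt t) T := by
  intro hc
  by_cases hTX : ∃ m : Fin t, (X m) ∈ T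
  · obtain ⟨m, hm⟩ := hTX
    have key := struct hc hm
    have hsub : T ⊆ {X i, X j, Y k} := hT.subset
    have hne : ∃ v ∈ ({X i, X j, Y k} : Set _), v ∉ T := Set.exists_of_ssubset hT
    -- U ⊆ T with ncard U = 3, but T ⊊ S with ncard S = 3
    have hTfin : T.Finite := Set.toFinite T
    rcases key with ⟨a, b, c, hab, hU⟩ | ⟨a, b, hab, hU⟩
    · have hUS : ({X a, X b, Y c} : Set _) ⊆ {X i, X j, Y k} := hU.trans hsub
      have : ({X a, X b, Y c} : Set _) = {X i, X j, Y k} :=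
        Set.eq_of_subset_of_ncard_le hUS (by rw [ncard1 hij, ncard1 hab]) (Set.toFinite _)
      exact hT.not_subset (this ▸ hU)
    · have hUS : ({X a, Y b, Z} : Set _) ⊆ {X i, X j, Y k} := hU.trans hsub
      have hz : Z ∈ ({X i, X j, Y k} : Set _) := hUS (by simp)
      simp at hz
  · push_neg at hTX
    have hTsub : T ⊆ {Y k} := by
      intro v hv
      rcases hT.subset hv with rfl | rfl | rfl
      · exact absurd hv (hTX i)
      · exact absurd hv (hTX j)
      · simp
    rcases hc.1 (X k) with h | ⟨u, hu, hadj⟩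
    · have := hTsub h; simp at this
    · have := hTsub hu
      simp only [Set.mem_singleton_iff] at this
      subst this
      simp at hadj

lemma minimal2 (ht : 2 ≤ t) {i j : Fin t} (hij : i ≠ j)
    {T : Set (Fin t ⊕ (Fin t ⊕ Unit))} (hT : T ⊂ {X i, Y j, Z}) :
    ¬ IsCDS (Gt t) T := by
  intro hc
  by_cases hTX : ∃ m : Fin t, (X m) ∈ T
  · obtain ⟨m, hm⟩ := hTX
    have key := struct hc hm
    have hsub : T ⊆ {X i, Y j, Z} := hT.subset
    rcases key with ⟨a, b, c, hab, hU⟩ | ⟨a, b, hab, hU⟩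
    · have hUS : ({X a, X b, Y c} : Set _) ⊆ {X i, Y j, Z} := hU.trans hsub
      have h1 : (X a) ∈ ({X i, Y j, Z} : Set _) := hUS (by simp)
      have h2 : (X b) ∈ ({X i, Y j, Z} : Set _) := hUS (by simp)
      simp only [Set.mem_insert_iff, Set.mem_singleton_iff] at h1 h2
      rcases h1 with h1 | h1 | h1 <;> rcases h2 with h2 | h2 | h2 <;>
        simp_all
    · have hUS : ({X a, Y b, Z} : Set _) ⊆ {X i, Y j, Z} := hU.trans hsub
      have : ({X a, Y b, Z} : Set _) = {X i, Y j, Z} :=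
        Set.eq_of_subset_of_ncard_le hUS (by rw [ncard2, ncard2]) (Set.toFinite _)
      exact hT.not_subset (this ▸ hU)
  · push_neg at hTX
    have hTsub : T ⊆ {Y j, Z} := by
      intro v hv
      rcases hT.subset hv with rfl | rfl | rfl
      · exact absurd hv (hTX i)
      · simp
      · simp
    rcases hc.1 (X j) with h | ⟨u, hu, hadj⟩
    · have := hTsub h; simp at this
    · rcases hTsub hu with rfl | rfl
      · simp at hadj
      · exact adj_zx hadj

lemma char (ht : 2 ≤ t) (S : Set (Fin t ⊕ (Fin t ⊕ Unit))) :
    (IsMinCDS (Gt t) S ∧ (S ∩ Set.range Sum.inl).Nonempty) ↔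
    ((∃ p : (Fin t × Fin t) × Fin t, p.1.1 < p.1.2 ∧ S = {X p.1.1, X p.1.2, Y p.2}) ∨
     (∃ p : Fin t × Fin t, p.1 ≠ p.2 ∧ S = {X p.1, Y p.2, Z})) := by
  constructor
  · rintro ⟨⟨hcds, hmin⟩, v, hvS, m, rfl⟩
    rcases struct hcds hvS with ⟨i, j, k, hij, hU⟩ | ⟨i, j, hij, hU⟩
    · have heq : ({X i, X j, Y k} : Set _) = S := by
        by_contra hne
        exact hmin _ (hU.ssubset_of_ne hne) (cds1 ht hij)
      left
      rcases lt_or_gt_of_ne hij with h | h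
      · exact ⟨((i, j), k), h, heq.symm⟩
      · exact ⟨((j, i), k), h, by rw [← heq, Set.insert_comm]⟩
    · have heq : ({X i, Y j, Z} : Set _) = S := by
        by_contra hne
        exact hmin _ (hU.ssubset_of_ne hne) (cds2 ht hij)
      exact Or.inr ⟨(i, j), hij, heq.symm⟩
  · rintro (⟨⟨⟨i, j⟩, k⟩, hlt, rfl⟩ | ⟨⟨i, j⟩, hij, rfl⟩)
    · exact ⟨⟨cds1 ht hlt.ne, fun T hT => minimal1 ht hlt.ne hT⟩,
        ⟨X i, by simp, ⟨i, rfl⟩⟩⟩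
    · exact ⟨⟨cds2 ht hij, fun T hT => minimal2 ht hij hT⟩,
        ⟨X i, by simp, ⟨i, rfl⟩⟩⟩

theorem stmt9 (t : ℕ) (ht : 2 ≤ t) :
    {S : Set (GtV t) |
        IsMinCDS (Gt t) S ∧ (S ∩ Set.range Sum.inl).Nonempty}.ncard =
      (t ^ 3 + t ^ 2) / 2 - t := by
  classical
  have hset : {S : Set (Fin t ⊕ (Fin t ⊕ Unit)) |
      IsMinCDS (Gt t) S ∧ (S ∩ Set.range Sum.inl).Nonempty} =
      (fun p : (Fin t × Fin t) × Fin t => ({X p.1.1, X p.1.2, Y p.2} : Set _)) ''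
        {p | p.1.1 < p.1.2} ∪
      (fun p : Fin t × Fin t => ({X p.1, Y p.2, Z} : Set _)) '' {p | p.1 ≠ p.2} := by
    ext S
    rw [Set.mem_setOf_eq, char ht S, Set.mem_union]
    simp only [Set.mem_image, Set.mem_setOf_eq]
    constructor
    · rintro (⟨p, h1, h2⟩ | ⟨p, h1, h2⟩)
      · exact Or.inl ⟨p, h1, h2.symm⟩
      · exact Or.inr ⟨p, h1, h2.symm⟩
    · rintro (⟨p, h1, h2⟩ | ⟨p, h1, h2⟩)
      · exact Or.inl ⟨p, h1, h2.symm⟩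
      · exact Or.inr ⟨p, h1, h2.symm⟩
  rw [hset]
  have hdisj : Disjoint
      ((fun p : (Fin t × Fin t) × Fin t => ({X p.1.1, X p.1.2, Y p.2} : Set _)) ''
        {p | p.1.1 < p.1.2})
      ((fun p : Fin t × Fin t => ({X p.1, Y p.2, Z} : Set _)) '' {p | p.1 ≠ p.2}) := by
    rw [Set.disjoint_left]
    rintro S ⟨p, _, rfl⟩ ⟨q, _, hq⟩
    have hz : (Z : Fin t ⊕ (Fin t ⊕ Unit)) ∈
        (fun p : Fin t × Fin t => ({X p.1, Y p.2, Z} : Set _)) q := by simp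
    rw [hq] at hz
    simp at hz
  rw [Set.ncard_union_eq hdisj (Set.toFinite _) (Set.toFinite _)]
  have hinj1 : Set.InjOn
      (fun p : (Fin t × Fin t) × Fin t => ({X p.1.1, X p.1.2, Y p.2} : Set _))
      {p | p.1.1 < p.1.2} := by
    rintro ⟨⟨i, j⟩, k⟩ hp ⟨⟨a, b⟩, c⟩ hq h
    simp only [Set.mem_setOf_eq] at hp hq
    simp only at h
    have Hi : i = a ∨ i = b := by
      have := h.subset (show (X i) ∈ ({X i, X j, Y k} : Set _) by simp)
      simpa using this
    have Hj : j = a ∨ j = b := by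
      have := h.subset (show (X j) ∈ ({X i, X j, Y k} : Set _) by simp)
      simpa using this
    have Ha : a = i ∨ a = j := by
      have := h.superset (show (X a) ∈ ({X a, X b, Y c} : Set _) by simp)
      simpa using this
    have Hk : k = c := by
      have := h.subset (show (Y k) ∈ ({X i, X j, Y k} : Set _) by simp)
      simpa using this
    subst Hk
    rcases Hi with rfl | rfl
    · rcases Hj with rfl | rfl
      · exact absurd hp (lt_irrefl _)
      · rfl
    · rcases Ha with rfl | rfl
      · exact absurd hq (lt_irrefl _)
      · exact absurd (hq.trans hp) (lt_irrefl _)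
  have hinj2 : Set.InjOn
      (fun p : Fin t × Fin t => ({X p.1, Y p.2, Z} : Set _)) {p | p.1 ≠ p.2} := by
    rintro ⟨i, j⟩ hp ⟨a, b⟩ hq h
    simp only at h
    have Hi : i = a := by
      have := h.subset (show (X i) ∈ ({X i, Y j, Z} : Set _) by simp)
      simpa using this
    have Hj : j = b := by
      have := h.subset (show (Y j) ∈ ({X i, Y j, Z} : Set _) by simp)
      simpa using this
    rw [Hi, Hj]
  rw [Set.ncard_image_of_injOn hinj1, Set.ncard_image_of_injOn hinj2]
  -- identify parameter sets with Finsets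
  have hP1 : ({p : (Fin t × Fin t) × Fin t | p.1.1 < p.1.2} : Set _) =
      ↑(((Finset.univ.filter fun q : Fin t × Fin t => q.1 < q.2) ×ˢ
        (Finset.univ : Finset (Fin t)))) := by
    ext ⟨⟨i, j⟩, k⟩
    simp [Finset.mem_product]
  have hP2 : ({p : Fin t × Fin t | p.1 ≠ p.2} : Set _) =
      ↑((Finset.univ : Finset (Fin t)).offDiag) := by
    ext ⟨i, j⟩
    simp [Finset.mem_offDiag]
  rw [hP1, hP2, Set.ncard_coe_finset, Set.ncard_coe_finset]
  rw [Finset.card_product, Finset.offDiag_card]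
  simp only [Finset.card_univ, Fintype.card_fin]
  -- counting c := #{(i,j) | i < j}
  set c := (Finset.univ.filter fun q : Fin t × Fin t => q.1 < q.2).card with hc
  have hswap : c = (Finset.univ.filter fun q : Fin t × Fin t => q.2 < q.1).card := by
    rw [hc]
    apply Finset.card_nbij' (fun p => p.swap) (fun p => p.swap) <;>
      simp [Finset.mem_filter, Set.MapsTo, Set.LeftInvOn, Set.RightInvOn]
  have hsplitc : 2 * c = t * t - t := by
    have hu : (Finset.univ.filter fun q : Fin t × Fin t => q.1 ≠ q.2) =
        (Finset.univ.filter fun q : Fin t × Fin t => q.1 < q.2) ∪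
        (Finset.univ.filter fun q : Fin t × Fin t => q.2 < q.1) := by
      rw [← Finset.filter_or]
      apply Finset.filter_congr
      intro x _
      exact ne_iff_lt_or_gt
    have hd : Disjoint (Finset.univ.filter fun q : Fin t × Fin t => q.1 < q.2)
        (Finset.univ.filter fun q : Fin t × Fin t => q.2 < q.1) := by
      rw [Finset.disjoint_left]
      intro p h1 h2
      simp only [Finset.mem_filter] at h1 h2
      exact absurd (h1.2.trans h2.2) (lt_irrefl _)
    have hoff : (Finset.univ.filter fun q : Fin t × Fin t => q.1 ≠ q.2) =
        (Finset.univ : Finset (Fin t)).offDiag := by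
      ext ⟨i, j⟩; simp [Finset.mem_offDiag]
    have := congrArg Finset.card hu
    rw [hoff, Finset.offDiag_card, Finset.card_union_of_disjoint hd, ← hc, ← hswap] at this
    simp only [Finset.card_univ, Fintype.card_fin] at this
    omega
  -- final arithmetic
  have e1 : 2 * (c * t) = t ^ 3 - t ^ 2 := by
    calc 2 * (c * t) = (2 * c) * t := by ring
      _ = (t * t - t) * t := by rw [hsplitc]
      _ = t ^ 3 - t ^ 2 := by rw [Nat.sub_mul]; ring_nf
  have e3 : t ^ 2 ≤ t ^ 3 := Nat.pow_le_pow_right (by omega) (by omega)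
  have e4 : t ≤ t ^ 2 := Nat.le_self_pow (by norm_num) t
  have e5 : 2 * ((t ^ 3 + t ^ 2) / 2) = t ^ 3 + t ^ 2 := by
    refine Nat.mul_div_cancel' (Even.two_dvd ?_)
    rcases Nat.even_or_odd t with h | h
    · have h3 : Even (t ^ 3) := Nat.even_pow.mpr ⟨h, by norm_num⟩
      have h2 : Even (t ^ 2) := Nat.even_pow.mpr ⟨h, by norm_num⟩
      exact h3.add h2
    · have h3 : Odd (t ^ 3) := h.pow
      have h2 : Odd (t ^ 2) := h.pow
      exact h3.add_odd h2
  have e6 : t * t - t = t ^ 2 - t := by ring_nf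
  rw [e6]
  omega

end Helpers
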